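/- Let u be a positive integer and n a natural number. For every matrix M ∈ 𝒯^{(u,1)}(2n+1) with (1,1) entry a and (2,1) entry c, one has max{a, c} ≤ G_n(u) and a + c ≤ F_n(u) + G_n(u), where F_n(u) = Σ_{i=0}^{n} C(2n−i, i)·u^{n−i} and G_n(u) = Σ_{i=0}^{n} C(2n+1−i, i)·u^{n+1−i}. -/

import Mathlib

open Matrix Finset

def Lm (u : ℕ) : Matrix (Fin 2) (Fin 2) ℕ := !![1, 0; u, 1]
def Rm (v : ℕ) : Matrix (Fin 2) (Fin 2) ℕ := !![1, v; 0, 1]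

/-- The product of the matrices corresponding to a word: `false ↦ L_u`, `true ↦ R_v`. -/
def wordProd (u v : ℕ) (w : List Bool) : Matrix (Fin 2) (Fin 2) ℕ :=
  (w.map (fun b => if b then Rm v else Lm u)).prod

/-- μ of a matrix: maximum of the four entries. -/
def matMax (M : Matrix (Fin 2) (Fin 2) ℕ) : ℕ :=
  max (max (M 0 0) (M 0 1)) (max (M 1 0) (M 1 1))

/-- μ(𝒯^{(u,v)}(I₂;n)): maximum of μ over all products of exactly n matrices each L_u or R_v. -/
def levelMax (u v n : ℕ) : ℕ :=
  Finset.univ.sup (fun w : Fin n → Bool => matMax (wordProd u v (List.ofFn w)))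

def Fb (u n : ℕ) : ℕ := ∑ i ∈ Finset.range (n+1), (2*n - i).choose i * u ^ (n - i)
def Gb (u n : ℕ) : ℕ := ∑ i ∈ Finset.range (n+1), (2*n + 1 - i).choose i * u ^ (n + 1 - i)

lemma Fb_succ (u n : ℕ) : Fb u (n+1) = Fb u n + Gb u n := by
  rw [Fb, Fb, Gb, Finset.sum_range_succ' (fun i => (2*(n+1) - i).choose i * u ^ ((n+1) - i)) (n+1),
    Finset.sum_range_succ' (fun i => (2*n + 1 - i).choose i * u ^ (n + 1 - i)) n]
  have key : ∀ j ∈ Finset.range (n+1),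
      (2*(n+1) - (j+1)).choose (j+1) * u ^ ((n+1) - (j+1))
      = (2*n - j).choose j * u ^ (n - j) + (2*n - j).choose (j+1) * u ^ (n - j) := by
    intro j hj
    simp only [Finset.mem_range] at hj
    have e1 : 2*(n+1) - (j+1) = (2*n - j) + 1 := by omega
    have e2 : (n+1) - (j+1) = n - j := by omega
    rw [e1, e2, Nat.choose_succ_succ, add_mul]
  rw [Finset.sum_congr rfl key, Finset.sum_add_distrib]
  have h3 : ∑ j ∈ Finset.range (n+1), (2*n - j).choose (j+1) * u ^ (n - j)
      = ∑ j ∈ Finset.range n, (2*n + 1 - (j+1)).choose (j+1) * u ^ (n + 1 - (j+1)) := by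
    rw [Finset.sum_range_succ]
    have hz : (2*n - n).choose (n+1) = 0 := Nat.choose_eq_zero_of_lt (by omega)
    rw [hz, zero_mul, add_zero]
    apply Finset.sum_congr rfl
    intro j hj
    simp only [Finset.mem_range] at hj
    congr 2 <;> omega
  rw [h3]
  simp only [Nat.sub_zero, Nat.choose_zero_right, one_mul]
  ring

lemma Gb_succ (u n : ℕ) : Gb u (n+1) = u * Fb u (n+1) + Gb u n := by
  have hf : u * Fb u (n+1) = ∑ i ∈ Finset.range (n+2), (2*(n+1) - i).choose i * u ^ (n+2-i) := by
    rw [Fb, Finset.mul_sum]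
    apply Finset.sum_congr rfl
    intro i hi
    simp only [Finset.mem_range] at hi
    have e : n + 2 - i = (n + 1 - i) + 1 := by omega
    rw [e, pow_succ]; ring
  rw [hf, Gb, Gb]
  rw [Finset.sum_range_succ' (fun i => (2*(n+1) + 1 - i).choose i * u ^ ((n+1) + 1 - i)) (n+1),
    Finset.sum_range_succ' (fun i => (2*(n+1) - i).choose i * u ^ (n+2-i)) (n+1)]
  have key : ∀ j ∈ Finset.range (n+1),
      (2*(n+1) + 1 - (j+1)).choose (j+1) * u ^ ((n+1) + 1 - (j+1))
      = (2*(n+1) - (j+1)).choose (j+1) * u ^ (n+2-(j+1))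
        + (2*n + 1 - j).choose j * u ^ (n + 1 - j) := by
    intro j hj
    simp only [Finset.mem_range] at hj
    have e1 : 2*(n+1) + 1 - (j+1) = (2*n + 1 - j) + 1 := by omega
    have e2 : 2*(n+1) - (j+1) = 2*n + 1 - j := by omega
    have e3 : (n+1) + 1 - (j+1) = n + 1 - j := by omega
    rw [e1, e2, e3, Nat.choose_succ_succ, add_mul]
    ring
  rw [Finset.sum_congr rfl key, Finset.sum_add_distrib]
  simp only [Nat.sub_zero, Nat.choose_zero_right, one_mul]
  ring

lemma uFb_le_Gb (u n : ℕ) : u * Fb u n ≤ Gb u n := by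
  rw [Fb, Gb, Finset.mul_sum]
  apply Finset.sum_le_sum
  intro i hi
  simp only [Finset.mem_range] at hi
  have e : n + 1 - i = (n - i) + 1 := by omega
  rw [e, pow_succ]
  calc u * ((2*n-i).choose i * u^(n-i)) = (2*n-i).choose i * (u^(n-i)*u) := by ring
    _ ≤ (2*n+1-i).choose i * (u^(n-i)*u) :=
        Nat.mul_le_mul_right _ (Nat.choose_le_choose i (by omega))

lemma wordProd_cons (u v : ℕ) (b : Bool) (w : List Bool) :
    wordProd u v (b :: w) = (if b then Rm v else Lm u) * wordProd u v w := by
  simp [wordProd]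

lemma L_mul_00 (u : ℕ) (M : Matrix (Fin 2) (Fin 2) ℕ) : (Lm u * M) 0 0 = M 0 0 := by
  simp [Lm, Matrix.mul_apply, Fin.sum_univ_two]
lemma L_mul_10 (u : ℕ) (M : Matrix (Fin 2) (Fin 2) ℕ) : (Lm u * M) 1 0 = u * M 0 0 + M 1 0 := by
  simp [Lm, Matrix.mul_apply, Fin.sum_univ_two]
lemma R_mul_00 (M : Matrix (Fin 2) (Fin 2) ℕ) : (Rm 1 * M) 0 0 = M 0 0 + M 1 0 := by
  simp [Rm, Matrix.mul_apply, Fin.sum_univ_two]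
lemma R_mul_10 (M : Matrix (Fin 2) (Fin 2) ℕ) : (Rm 1 * M) 1 0 = M 1 0 := by
  simp [Rm, Matrix.mul_apply, Fin.sum_univ_two]

lemma key (u : ℕ) (hu : 1 ≤ u) : ∀ n (w : List Bool), w.length = 2*n+1 →
    wordProd u 1 w 1 0 ≤ Gb u n ∧
    wordProd u 1 w 0 0 + wordProd u 1 w 1 0 ≤ Fb u n + Gb u n ∧
    u * wordProd u 1 w 0 0 + wordProd u 1 w 1 0 ≤ u * Fb u n + Gb u n ∧
    wordProd u 1 w 0 0 + u * Fb u n ≤ Fb u n + Gb u n := by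
  intro n
  induction n with
  | zero =>
    intro w hw
    match w, hw with
    | [b], _ =>
      have hF : Fb u 0 = 1 := by simp [Fb]
      have hG : Gb u 0 = u := by simp [Gb]
      rw [hF, hG]
      cases b <;> simp [wordProd, Lm, Rm]
  | succ n ih =>
    intro w hw
    match w, hw with
    | x :: y :: w', hw =>
      have hw' : w'.length = 2*n+1 := by
        simp only [List.length_cons] at hw; omega
      obtain ⟨H1, H2, H3, H4⟩ := ih w' hw'
      set a := wordProd u 1 w' 0 0 with ha
      set c := wordProd u 1 w' 1 0 with hc
      set F := Fb u n with hFdef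
      set G := Gb u n with hGdef
      have hFG : Fb u (n+1) = F + G := Fb_succ u n
      have hGG : Gb u (n+1) = u * (F + G) + G := by rw [Gb_succ, Fb_succ]
      have hF1 : F ≤ u * F := Nat.le_mul_of_pos_left F hu
      have hG1 : G ≤ u * G := Nat.le_mul_of_pos_left G hu
      have hA : a ≤ G := by omega
      have hFleG : F ≤ G := le_trans hF1 (uFb_le_Gb u n)
      have hu2 : u * F ≤ u * (u * F) := Nat.le_mul_of_pos_left (u*F) hu
      have m1 : u * c ≤ u * G := Nat.mul_le_mul_left u H1
      have m2 : u * (a + c) ≤ u * (F + G) := Nat.mul_le_mul_left u H2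
      have m3 : u * (u * a + c) ≤ u * (u * F + G) := Nat.mul_le_mul_left u H3
      have m4 : u * (a + u * F) ≤ u * (F + G) := Nat.mul_le_mul_left u H4
      have mA : u * a ≤ u * G := Nat.mul_le_mul_left u hA
      rw [hFG, hGG]
      cases x <;> cases y <;>
        simp only [wordProd_cons, if_true, if_false, Bool.false_eq_true, ite_true, ite_false,
          L_mul_00, L_mul_10, R_mul_00, R_mul_10, ← ha, ← hc] <;>
        refine ⟨by linarith [Nat.zero_le (u*F), Nat.zero_le (u*G), Nat.zero_le (u*a), Nat.zero_le (u*c), Nat.zero_le (u*(u*F)), Nat.zero_le F, Nat.zero_le G, Nat.zero_le a, Nat.zero_le c, hG1], by linarith [Nat.zero_le (u*F), Nat.zero_le (u*G), Nat.zero_le (u*a), Nat.zero_le (u*c), Nat.zero_le (u*(u*F)), Nat.zero_le F, Nat.zero_le G, Nat.zero_le a, Nat.zero_le c, hG1], by linarith [Nat.zero_le (u*F), Nat.zero_le (u*G), Nat.zero_le (u*a), Nat.zero_le (u*c), Nat.zero_le (u*(u*F)), Nat.zero_le F, Nat.zero_le G, Nat.zero_le a, Nat.zero_le c, hG1], by linarith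 [Nat.zero_le (u*F), Nat.zero_le (u*G), Nat.zero_le (u*a), Nat.zero_le (u*c), Nat.zero_le (u*(u*F)), Nat.zero_le F, Nat.zero_le G, Nat.zero_le a, Nat.zero_le c, hG1]⟩

theorem stmt15 (u : ℕ) (hu : 1 ≤ u) (n : ℕ)
    (w : List Bool) (hw : w.length = 2 * n + 1)
    (M : Matrix (Fin 2) (Fin 2) ℕ) (hM : M = wordProd u 1 w) :
    max (M 0 0) (M 1 0) ≤
      ∑ i ∈ Finset.range (n + 1), (2 * n + 1 - i).choose i * u ^ (n + 1 - i) ∧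
    M 0 0 + M 1 0 ≤
      (∑ i ∈ Finset.range (n + 1), (2 * n - i).choose i * u ^ (n - i)) +
        ∑ i ∈ Finset.range (n + 1), (2 * n + 1 - i).choose i * u ^ (n + 1 - i) := by
  obtain ⟨H1, H2, H3, H4⟩ := key u hu n w hw
  subst hM
  have eG : (∑ i ∈ Finset.range (n + 1), (2 * n + 1 - i).choose i * u ^ (n + 1 - i)) = Gb u n := rfl
  have eF : (∑ i ∈ Finset.range (n + 1), (2 * n - i).choose i * u ^ (n - i)) = Fb u n := rfl
  rw [eG, eF]
  have hF1 : Fb u n ≤ u * Fb u n := Nat.le_mul_of_pos_left _ hu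
  have hA : wordProd u 1 w 0 0 ≤ Gb u n := by omega
  exact ⟨max_le hA H1, H2⟩
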